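/- arXiv:2007.10916 — 5 statements merged into one kernel-verified Lean document; each statement's English description precedes it below -/
import Mathlib

section
/- In the setting of the previous statement, suppose additionally that J ∈ ℝⁿ satisfies T_μ J = J + c where T_μ J = g_μ + P_μ J, and that P_μ θ ≤ β θ. Then for every k ≥ 1, T_μ^k J ≤ J + (‖Θ^{−1}λ‖_∞ / (1 − β)) · θ componentwise, where λ = max(T_μ J − J, 0). -/
open Finset

theorem policy_iterates_upper_bound {n : ℕ}
    (Pμ : Matrix (Fin n) (Fin n) ℝ) (gμ θ : Fin n → ℝ) (β : ℝ)
    (hβ0 : 0 ≤ β) (hβ1 : β < 1)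
    (hPnn : ∀ i j, 0 ≤ Pμ i j)
    (hθ : ∀ i, 0 < θ i)
    (hcontr : ∀ i, Pμ.mulVec θ i ≤ β * θ i)
    (J c lam : Fin n → ℝ)
    (hJc : gμ + Pμ.mulVec J = J + c)
    (hlam : ∀ i, lam i = max ((gμ + Pμ.mulVec J - J) i) 0) :
    ∀ k : ℕ, 1 ≤ k → ∀ i,
      (fun v => gμ + Pμ.mulVec v)^[k] J i
        ≤ J i + ((⨆ j, |lam j / θ j|) / (1 - β)) * θ i := by
  intro k hk i
  have hne : Nonempty (Fin n) := ⟨i⟩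
  set L := ⨆ j, |lam j / θ j| with hLdef
  have hbdd : BddAbove (Set.range fun j => |lam j / θ j|) :=
    Set.Finite.bddAbove (Set.finite_range _)
  have hL0 : 0 ≤ L := le_trans (abs_nonneg _) (le_ciSup hbdd i)
  have hlamθ : ∀ j, lam j ≤ L * θ j := by
    intro j
    have h1 : lam j / θ j ≤ L := le_trans (le_abs_self _) (le_ciSup hbdd j)
    have := (hθ j)
    calc lam j = (lam j / θ j) * θ j := by field_simp
      _ ≤ L * θ j := mul_le_mul_of_nonneg_right h1 (hθ j).le
  have hclam : ∀ j, c j ≤ lam j := by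
    intro j
    have : (gμ + Pμ.mulVec J - J) j = c j := by
      have := congrFun hJc j
      simp only [Pi.add_apply, Pi.sub_apply] at this ⊢
      linarith
    rw [hlam j, this]
    exact le_max_left _ _
  have key : ∀ m : ℕ, ∀ i,
      (fun v => gμ + Pμ.mulVec v)^[m] J i
        ≤ J i + (L * ∑ t ∈ Finset.range m, β ^ t) * θ i := by
    intro m
    induction m with
    | zero => intro i; simp
    | succ m ih =>
      intro i
      set S := L * ∑ t ∈ Finset.range m, β ^ t with hSdef
      have hS0 : 0 ≤ S :=
        mul_nonneg hL0 (Finset.sum_nonneg fun t _ => pow_nonneg hβ0 t)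
      rw [Function.iterate_succ_apply']
      have hstep : (gμ + Pμ.mulVec ((fun v => gμ + Pμ.mulVec v)^[m] J)) i
          = gμ i + ∑ j, Pμ i j * ((fun v => gμ + Pμ.mulVec v)^[m] J) j := by
        simp [Matrix.mulVec, dotProduct]
      rw [hstep]
      have h1 : ∑ j, Pμ i j * ((fun v => gμ + Pμ.mulVec v)^[m] J) j
          ≤ ∑ j, Pμ i j * (J j + S * θ j) :=
        Finset.sum_le_sum fun j _ => mul_le_mul_of_nonneg_left (ih j) (hPnn i j)
      have h2 : ∑ j, Pμ i j * (J j + S * θ j)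
          = (∑ j, Pμ i j * J j) + S * ∑ j, Pμ i j * θ j := by
        rw [Finset.mul_sum, ← Finset.sum_add_distrib]
        congr 1; ext j; ring
      have hPJ : gμ i + ∑ j, Pμ i j * J j = J i + c i := by
        have := congrFun hJc i
        simpa [Matrix.mulVec, dotProduct] using this
      have hPθ : ∑ j, Pμ i j * θ j ≤ β * θ i := by
        have := hcontr i
        simpa [Matrix.mulVec, dotProduct] using this
      have hc : c i ≤ L * θ i := le_trans (hclam i) (hlamθ i)
      have hsum : (L * ∑ t ∈ Finset.range (m + 1), β ^ t) * θ i
          = L * θ i + S * (β * θ i) := by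
        have hg : ∑ t ∈ Finset.range (m + 1), β ^ t
            = β * (∑ t ∈ Finset.range m, β ^ t) + 1 := geom_sum_succ
        rw [hg, hSdef]
        ring
      have hSP : S * ∑ j, Pμ i j * θ j ≤ S * (β * θ i) :=
        mul_le_mul_of_nonneg_left hPθ hS0
      calc gμ i + ∑ j, Pμ i j * ((fun v => gμ + Pμ.mulVec v)^[m] J) j
          ≤ gμ i + ((∑ j, Pμ i j * J j) + S * ∑ j, Pμ i j * θ j) := by
            rw [← h2]; linarith
        _ ≤ J i + c i + S * (β * θ i) := by linarith
        _ ≤ J i + (L * ∑ t ∈ Finset.range (m + 1), β ^ t) * θ i := by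
            rw [hsum]; linarith
  have hgeo : ∑ t ∈ Finset.range k, β ^ t ≤ 1 / (1 - β) := by
    have h1 : (∑ t ∈ Finset.range k, β ^ t) * (β - 1) = β ^ k - 1 := geom_sum_mul β k
    have h2 : (0:ℝ) ≤ β ^ k := pow_nonneg hβ0 k
    rw [le_div_iff₀ (by linarith : (0:ℝ) < 1 - β)]
    nlinarith
  have := key k i
  have hfin : (L * ∑ t ∈ Finset.range k, β ^ t) * θ i ≤ L / (1 - β) * θ i := by
    apply mul_le_mul_of_nonneg_right _ (hθ i).le
    calc L * ∑ t ∈ Finset.range k, β ^ t ≤ L * (1 / (1 - β)) :=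
          mul_le_mul_of_nonneg_left hgeo hL0
      _ = L / (1 - β) := by ring
  linarith
end

section
/- Let T_μ J = g_μ + P_μ J with P_μ θ ≤ β θ for positive θ and β ∈ [0,1), and let J^μ be the unique fixed point of T_μ. If J ∈ ℝⁿ satisfies T_μ J = J + c and λ = max(c,0), then J^μ ≤ J + (‖Θ^{−1}λ‖_∞ / (1−β)) θ componentwise. -/
open Finset

theorem policy_value_upper_bound {n : ℕ}
    (Pμ : Matrix (Fin n) (Fin n) ℝ) (gμ θ : Fin n → ℝ) (β : ℝ)
    (hβ0 : 0 ≤ β) (hβ1 : β < 1)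
    (hPnn : ∀ i j, 0 ≤ Pμ i j)
    (hθ : ∀ i, 0 < θ i)
    (hcontr : ∀ i, Pμ.mulVec θ i ≤ β * θ i)
    (Jμ : Fin n → ℝ)
    (hfix : gμ + Pμ.mulVec Jμ = Jμ)
    (huniq : ∀ J' : Fin n → ℝ, gμ + Pμ.mulVec J' = J' → J' = Jμ)
    (J c lam : Fin n → ℝ)
    (hJc : gμ + Pμ.mulVec J = J + c)
    (hlam : ∀ i, lam i = max (c i) 0) :
    ∀ i, Jμ i ≤ J i + ((⨆ j, |lam j / θ j|) / (1 - β)) * θ i := by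
  intro k
  have hne : Nonempty (Fin n) := ⟨k⟩
  set M := (⨆ j, |lam j / θ j|) with hMdef
  have hbdd : BddAbove (Set.range fun j => |lam j / θ j|) :=
    Set.Finite.bddAbove (Set.finite_range _)
  have hM0 : 0 ≤ M := le_trans (abs_nonneg _) (le_ciSup hbdd k)
  have h1β : 0 < 1 - β := by linarith
  have hcM : ∀ i, c i ≤ M * θ i := by
    intro i
    have h1 : c i ≤ lam i := by rw [hlam i]; exact le_max_left _ _
    have h2 : lam i / θ i ≤ M := le_trans (le_abs_self _) (le_ciSup hbdd i)
    have h3 := (div_le_iff₀ (hθ i)).mp h2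
    linarith
  set d := fun i => Jμ i - J i with hddef
  have hd : ∀ i, d i = (∑ j, Pμ i j * d j) + c i := by
    intro i
    have h1 := congrFun hfix i
    have h2 := congrFun hJc i
    simp only [Pi.add_apply, Matrix.mulVec, dotProduct] at h1 h2
    simp only [hddef, mul_sub, Finset.sum_sub_distrib]
    linarith
  obtain ⟨i, hi⟩ := Finite.exists_max (fun j => d j / θ j)
  set t := d i / θ i with htdef
  have hdt : ∀ j, d j ≤ t * θ j := by
    intro j
    have h := hi j
    have hθj := hθ j
    have : d j = (d j / θ j) * θ j := by field_simp
    rw [this]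
    exact mul_le_mul_of_nonneg_right h hθj.le
  rcases le_or_gt t 0 with ht | ht
  · have hk : d k ≤ 0 := by nlinarith [hdt k, hθ k]
    have hpos : 0 ≤ M / (1 - β) * θ k := mul_nonneg (div_nonneg hM0 h1β.le) (hθ k).le
    simp only [hddef] at hk
    linarith
  · have hti : t * θ i = d i := by
      have hθi := (hθ i).ne'
      rw [htdef, div_mul_cancel₀ _ hθi]
    have hsum : ∑ j, Pμ i j * d j ≤ ∑ j, Pμ i j * (t * θ j) := by
      apply Finset.sum_le_sum
      intro j _
      exact mul_le_mul_of_nonneg_left (hdt j) (hPnn i j)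
    have h2 : ∑ j, Pμ i j * (t * θ j) = t * (Pμ.mulVec θ i) := by
      simp only [Matrix.mulVec, dotProduct, Finset.mul_sum]
      apply Finset.sum_congr rfl
      intro j _
      ring
    have h3 : t * Pμ.mulVec θ i ≤ t * (β * θ i) :=
      mul_le_mul_of_nonneg_left (hcontr i) ht.le
    have hdi : d i ≤ t * (β * θ i) + M * θ i := by
      have := hd i
      have := hcM i
      linarith
    have htM : t ≤ M / (1 - β) := by
      rw [le_div_iff₀ h1β]
      have hθi := hθ i
      nlinarith
    have hfin : d k ≤ M / (1 - β) * θ k :=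
      le_trans (hdt k) (mul_le_mul_of_nonneg_right htM (hθ k).le)
    simp only [hddef] at hfin
    linarith
end

section
/- With T the Bellman operator (as above) and μ a greedy policy for J (meaning T_μ J = T J), if additionally J^μ ≤ J + (‖Θ^{−1}λ‖_∞/(1−β)) θ, then J^μ ≤ T J + (β‖Θ^{−1}λ‖_∞/(1−β)) θ componentwise, where λ = max(T J − J, 0). -/
open Finset

/-- The Bellman (dynamic programming) operator with discount factor 1. -/
noncomputable def bellman {n : ℕ} {A : Type*} [Fintype A] [Nonempty A]
    (P : A → Matrix (Fin n) (Fin n) ℝ) (g : Fin n → A → ℝ) (J : Fin n → ℝ) :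
    Fin n → ℝ :=
  fun i => ⨅ a : A, (g i a + ∑ j, P a i j * J j)

theorem greedy_policy_value_bound {n : ℕ} {A : Type*} [Fintype A] [Nonempty A]
    (P : A → Matrix (Fin n) (Fin n) ℝ) (g : Fin n → A → ℝ)
    (θ : Fin n → ℝ) (β : ℝ)
    (hβ0 : 0 ≤ β) (hβ1 : β < 1)
    (hPnn : ∀ a i j, 0 ≤ P a i j)
    (hθ : ∀ i, 0 < θ i)
    (hcontr : ∀ a i, ∑ j, P a i j * θ j ≤ β * θ i)
    (μ : Fin n → A)   -- the policy
    (Pμ : Matrix (Fin n) (Fin n) ℝ) (gμ : Fin n → ℝ)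
    (hPμ : ∀ i j, Pμ i j = P (μ i) i j) (hgμ : ∀ i, gμ i = g i (μ i))
    (J Jμ lam : Fin n → ℝ)
    (hgreedy : gμ + Pμ.mulVec J = bellman P g J)   -- μ is greedy for J
    (hfix : gμ + Pμ.mulVec Jμ = Jμ)                 -- Jμ is the fixed point of T_μ
    (huniq : ∀ J' : Fin n → ℝ, gμ + Pμ.mulVec J' = J' → J' = Jμ)
    (hlam : ∀ i, lam i = max (bellman P g J i - J i) 0)
    (hJμ : ∀ i, Jμ i ≤ J i + ((⨆ j, |lam j / θ j|) / (1 - β)) * θ i) :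
    ∀ i, Jμ i ≤ bellman P g J i + (β * (⨆ j, |lam j / θ j|) / (1 - β)) * θ i := by
  intro i
  haveI : Nonempty (Fin n) := ⟨i⟩
  set S := ⨆ j, |lam j / θ j| with hS
  have hSnn : 0 ≤ S := by
    have h := le_ciSup (Set.Finite.bddAbove (Set.finite_range fun j => |lam j / θ j|)) i
    exact le_trans (abs_nonneg _) h
  have h1β : 0 < 1 - β := by linarith
  have hc : 0 ≤ S / (1 - β) := div_nonneg hSnn h1β.le
  have h1 : gμ i + ∑ j, Pμ i j * Jμ j = Jμ i := by
    have := congrFun hfix i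
    simpa [Matrix.mulVec, dotProduct] using this
  have h2 : gμ i + ∑ j, Pμ i j * J j = bellman P g J i := by
    have := congrFun hgreedy i
    simpa [Matrix.mulVec, dotProduct] using this
  have key : Jμ i = bellman P g J i + ∑ j, Pμ i j * (Jμ j - J j) := by
    rw [← h1, ← h2]
    simp [mul_sub, Finset.sum_sub_distrib]
  have hsum : ∑ j, Pμ i j * (Jμ j - J j) ≤ (S / (1 - β)) * (β * θ i) := by
    calc ∑ j, Pμ i j * (Jμ j - J j) ≤ ∑ j, Pμ i j * ((S / (1 - β)) * θ j) := by
          apply Finset.sum_le_sum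
          intro j _
          have hP : 0 ≤ Pμ i j := by rw [hPμ]; exact hPnn _ _ _
          have := hJμ j
          exact mul_le_mul_of_nonneg_left (by linarith) hP
      _ = (S / (1 - β)) * ∑ j, Pμ i j * θ j := by
          rw [Finset.mul_sum]; exact Finset.sum_congr rfl fun j _ => by ring
      _ ≤ (S / (1 - β)) * (β * θ i) := by
          apply mul_le_mul_of_nonneg_left _ hc
          have := hcontr (μ i) i
          simpa [hPμ] using this
  rw [key]
  have : (S / (1 - β)) * (β * θ i) = β * S / (1 - β) * θ i := by ring
  linarith [hsum]
end

section
/- (Supermartingale convergence theorem with perturbation.) Let {X_t}, {Y_t}, {Z_t} be sequences of nonnegative random variables adapted to a filtration {F_t}, with E[Y_{t+1} | F_t] ≤ Y_t − X_t + Z_t for all t, and Σ_t Z_t < ∞ almost surely. Then Σ_t X_t < ∞ almost surely and Y_t converges almost surely to a nonnegative random variable Y_∞. -/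
open MeasureTheory Filter Topology

/-- Supermartingale convergence theorem with perturbation
(Proposition 4.2 in Bertsekas–Tsitsiklis, Theorem A.1 in the paper). -/
theorem supermartingale_convergence_with_perturbation
    {Ω : Type*} {m0 : MeasurableSpace Ω} {μ : Measure Ω} [IsProbabilityMeasure μ]
    (ℱ : Filtration ℕ m0) (X Y Z : ℕ → Ω → ℝ)
    (hXadp : ∀ t, StronglyMeasurable[ℱ t] (X t))
    (hYadp : ∀ t, StronglyMeasurable[ℱ t] (Y t))
    (hZadp : ∀ t, StronglyMeasurable[ℱ t] (Z t))
    (hXint : ∀ t, Integrable (X t) μ)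
    (hYint : ∀ t, Integrable (Y t) μ)
    (hZint : ∀ t, Integrable (Z t) μ)
    (hXnn : ∀ t, 0 ≤ᵐ[μ] X t)
    (hYnn : ∀ t, 0 ≤ᵐ[μ] Y t)
    (hZnn : ∀ t, 0 ≤ᵐ[μ] Z t)
    (hsm : ∀ t, μ[Y (t + 1) | ℱ t] ≤ᵐ[μ] fun ω => Y t ω - X t ω + Z t ω)
    (hZsum : ∀ᵐ ω ∂μ, Summable fun t => Z t ω) :
    ∃ Ylim : Ω → ℝ, ∀ᵐ ω ∂μ,
      (Summable fun t => X t ω) ∧ 0 ≤ Ylim ω ∧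
        Tendsto (fun t => Y t ω) atTop (𝓝 (Ylim ω)) := by
  classical
  -- The compensated process `M`
  set M : ℕ → Ω → ℝ := fun t ω =>
    Y t ω + ∑ s ∈ Finset.range t, X s ω - ∑ s ∈ Finset.range t, Z s ω with hMdef
  have hSXm : ∀ t u, t ≤ u + 1 →
      StronglyMeasurable[ℱ u] (fun ω => ∑ s ∈ Finset.range t, X s ω) := fun t u htu =>
    Finset.stronglyMeasurable_fun_sum _ fun s hs =>
      (hXadp s).mono (ℱ.mono (by have := Finset.mem_range.1 hs; omega))
  have hSZm : ∀ t u, t ≤ u + 1 →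
      StronglyMeasurable[ℱ u] (fun ω => ∑ s ∈ Finset.range t, Z s ω) := fun t u htu =>
    Finset.stronglyMeasurable_fun_sum _ fun s hs =>
      (hZadp s).mono (ℱ.mono (by have := Finset.mem_range.1 hs; omega))
  have hSXint : ∀ t, Integrable (fun ω => ∑ s ∈ Finset.range t, X s ω) μ := fun t =>
    integrable_finset_sum _ fun s _ => hXint s
  have hSZint : ∀ t, Integrable (fun ω => ∑ s ∈ Finset.range t, Z s ω) μ := fun t =>
    integrable_finset_sum _ fun s _ => hZint s
  have hMadp : ∀ t, StronglyMeasurable[ℱ t] (M t) := fun t =>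
    ((hYadp t).add (hSXm t t (by omega))).sub (hSZm t t (by omega))
  have hMint : ∀ t, Integrable (M t) μ := fun t =>
    ((hYint t).add (hSXint t)).sub (hSZint t)
  -- the one step supermartingale inequality for `M`
  have hMle : ∀ t, μ[M (t + 1)|ℱ t] ≤ᵐ[μ] M t := by
    intro t
    set g : Ω → ℝ := fun ω =>
      ∑ s ∈ Finset.range (t + 1), X s ω - ∑ s ∈ Finset.range (t + 1), Z s ω with hgdef
    have hgint : Integrable g μ := (hSXint (t + 1)).sub (hSZint (t + 1))
    have hgm : StronglyMeasurable[ℱ t] g := (hSXm (t + 1) t le_rfl).sub (hSZm (t + 1) t le_rfl)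
    have hrw : M (t + 1) = Y (t + 1) + g := by
      funext ω; simp only [hMdef, hgdef, Pi.add_apply]; ring
    have e1 : μ[M (t + 1)|ℱ t] =ᵐ[μ] μ[Y (t + 1)|ℱ t] + μ[g|ℱ t] := by
      rw [hrw]; exact condExp_add (hYint (t + 1)) hgint _
    have e2 : μ[g|ℱ t] = g := condExp_of_stronglyMeasurable (ℱ.le t) hgm hgint
    filter_upwards [e1, hsm t] with ω h1 h2
    rw [h1, Pi.add_apply, e2]
    simp only [hMdef, hgdef, Finset.sum_range_succ]
    linarith
  -- stopping data for level `c`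
  set Ps : ℕ → ℕ → Set Ω := fun c s =>
    {ω | (c : ℝ) < ∑ r ∈ Finset.range (s + 1), Z r ω} with hPsdef
  set B : ℕ → ℕ → Set Ω := fun c t => {ω | ∀ s, s < t → ω ∉ Ps c s} with hBdef
  set Cs : ℕ → ℕ → Set Ω := fun c k => Ps c k ∩ B c k with hCdef
  set N : ℕ → ℕ → Ω → ℝ := fun c t =>
    (B c t).indicator (M t) + fun ω => ∑ k ∈ Finset.range t, (Cs c k).indicator (M k) ω
    with hNdef
  have hPmem : ∀ c s ω, ω ∈ Ps c s ↔ (c : ℝ) < ∑ r ∈ Finset.range (s + 1), Z r ω := by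
    intro c s ω; simp [hPsdef]
  have hBmem : ∀ c t ω, ω ∈ B c t ↔ ∀ s, s < t → ω ∉ Ps c s := by
    intro c t ω; simp only [hBdef]; rfl
  have hCmem : ∀ c k ω, ω ∈ Cs c k ↔ ω ∈ Ps c k ∧ ω ∈ B c k := by
    intro c k ω; simp only [hCdef]; rfl
  have hPsm : ∀ c s u, s ≤ u → MeasurableSet[ℱ u] (Ps c s) := by
    intro c s u hsu
    have h := (hSZm (s + 1) u (by omega)).measurable
    simp only [hPsdef]
    exact measurableSet_lt measurable_const h
  have hBM : ∀ c t u, t ≤ u + 1 → MeasurableSet[ℱ u] (B c t) := by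
    intro c t u htu
    have heq : B c t = ⋂ s ∈ Set.Iio t, (Ps c s)ᶜ := by
      ext ω; simp [hBmem c t ω, Set.mem_iInter]
    rw [heq]
    exact MeasurableSet.biInter (Set.to_countable _) fun s hs =>
      (hPsm c s u (by simp at hs; omega)).compl
  have hCM : ∀ c k, MeasurableSet[ℱ k] (Cs c k) := by
    intro c k
    have : Cs c k = Ps c k ∩ B c k := by simp [hCdef]
    rw [this]
    exact (hPsm c k k le_rfl).inter (hBM c k k (by omega))
  have hNadp : ∀ c t, StronglyMeasurable[ℱ t] (N c t) := by
    intro c t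
    simp only [hNdef]
    exact ((hMadp t).indicator (hBM c t t (by omega))).add
      (Finset.stronglyMeasurable_fun_sum _ fun k hk =>
        ((hMadp k).mono (ℱ.mono (Finset.mem_range.1 hk).le)).indicator
          ((ℱ.mono (Finset.mem_range.1 hk).le) _ (hCM c k)))
  have hNint : ∀ c t, Integrable (N c t) μ := by
    intro c t
    simp only [hNdef]
    exact ((hMint t).indicator ((ℱ.le t) _ (hBM c t t (by omega)))).add
      (integrable_finset_sum _ fun k hk => (hMint k).indicator ((ℱ.le k) _ (hCM c k)))
  -- the recurrence for the stopped process
  have hNrec : ∀ c t, N c (t + 1) = N c t + (B c (t + 1)).indicator (M (t + 1) - M t) := by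
    intro c t; funext ω
    have hmem : ω ∈ B c (t + 1) ↔ ω ∈ B c t ∧ ω ∉ Ps c t := by
      rw [hBmem, hBmem]
      constructor
      · exact fun h => ⟨fun s hs => h s (by omega), h t (by omega)⟩
      · rintro ⟨h1, h2⟩ s hs
        rcases Nat.lt_succ_iff_lt_or_eq.mp hs with h | h
        · exact h1 s h
        · exact h ▸ h2
    simp only [hNdef, Pi.add_apply, Finset.sum_range_succ]
    by_cases h1 : ω ∈ B c t
    · by_cases h2 : ω ∈ Ps c t
      · have hB1 : ω ∉ B c (t + 1) := fun h => (hmem.1 h).2 h2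
        have hC : ω ∈ Cs c t := (hCmem c t ω).2 ⟨h2, h1⟩
        rw [Set.indicator_of_notMem hB1, Set.indicator_of_notMem hB1,
          Set.indicator_of_mem hC, Set.indicator_of_mem h1]
        ring
      · have hB1 : ω ∈ B c (t + 1) := hmem.2 ⟨h1, h2⟩
        have hC : ω ∉ Cs c t := fun h => h2 ((hCmem c t ω).1 h).1
        rw [Set.indicator_of_mem hB1, Set.indicator_of_mem hB1,
          Set.indicator_of_notMem hC, Set.indicator_of_mem h1, Pi.sub_apply]
        ring
    · have hB1 : ω ∉ B c (t + 1) := fun h => h1 (hmem.1 h).1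
      have hC : ω ∉ Cs c t := fun h => h1 ((hCmem c t ω).1 h).2
      rw [Set.indicator_of_notMem hB1, Set.indicator_of_notMem hB1,
        Set.indicator_of_notMem hC, Set.indicator_of_notMem h1]
      ring
  -- `N c` is a supermartingale
  have hNle : ∀ c t, μ[N c (t + 1)|ℱ t] ≤ᵐ[μ] N c t := by
    intro c t
    have hBM' : MeasurableSet[ℱ t] (B c (t + 1)) := hBM c (t + 1) t le_rfl
    have hdiff : Integrable (M (t + 1) - M t) μ := (hMint (t + 1)).sub (hMint t)
    have hind : Integrable ((B c (t + 1)).indicator (M (t + 1) - M t)) μ :=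
      hdiff.indicator ((ℱ.le t) _ hBM')
    have e1 : μ[N c (t + 1)|ℱ t] =ᵐ[μ]
        μ[N c t|ℱ t] + μ[(B c (t + 1)).indicator (M (t + 1) - M t)|ℱ t] := by
      rw [hNrec c t]; exact condExp_add (hNint c t) hind _
    have e2 : μ[N c t|ℱ t] = N c t :=
      condExp_of_stronglyMeasurable (ℱ.le t) (hNadp c t) (hNint c t)
    have e3 : μ[(B c (t + 1)).indicator (M (t + 1) - M t)|ℱ t] =ᵐ[μ]
        (B c (t + 1)).indicator (μ[M (t + 1) - M t|ℱ t]) := condExp_indicator hdiff hBM'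
    have e4 : μ[M (t + 1) - M t|ℱ t] =ᵐ[μ] μ[M (t + 1)|ℱ t] - μ[M t|ℱ t] :=
      condExp_sub (hMint (t + 1)) (hMint t) _
    have e5 : μ[M t|ℱ t] = M t := condExp_of_stronglyMeasurable (ℱ.le t) (hMadp t) (hMint t)
    rw [e5] at e4
    filter_upwards [e1, e3, e4, hMle t] with ω h1 h3 h4 h5
    rw [h1, Pi.add_apply, e2, h3]
    by_cases hω : ω ∈ B c (t + 1)
    · rw [Set.indicator_of_mem hω, h4, Pi.sub_apply]
      linarith
    · rw [Set.indicator_of_notMem hω]; simp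
  have hNsm : ∀ c, Supermartingale (N c) ℱ μ := fun c =>
    supermartingale_nat (fun t => hNadp c t) (hNint c) (hNle c)
  -- integral bounds
  have hNN0 : ∀ c t, ∫ ω, N c t ω ∂μ ≤ ∫ ω, N c 0 ω ∂μ := by
    intro c t
    have h := (hNsm c).2.1 0 t (Nat.zero_le t)
    calc ∫ ω, N c t ω ∂μ = ∫ ω, (μ[N c t|ℱ 0]) ω ∂μ := (integral_condExp (ℱ.le 0)).symm
      _ ≤ ∫ ω, N c 0 ω ∂μ := integral_mono_ae integrable_condExp (hNint c 0) h
  have hN0 : ∀ c, ∫ ω, N c 0 ω ∂μ = ∫ ω, Y 0 ω ∂μ := by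
    intro c
    have hNY : N c 0 = Y 0 := by
      funext ω
      have hB0 : ω ∈ B c 0 := (hBmem c 0 ω).2 (fun s hs => absurd hs (by omega))
      simp [hNdef, hMdef, Set.indicator_of_mem hB0]
    rw [hNY]
  -- almost sure lower bound for the stopped process
  have hlow : ∀ (c t : ℕ), ∀ᵐ ω ∂μ, -(c : ℝ) ≤ N c t ω := by
    intro c t
    filter_upwards [ae_all_iff.2 hXnn, ae_all_iff.2 hYnn, ae_all_iff.2 hZnn] with ω hx hy hz
    simp only [Pi.zero_apply] at hx hy hz
    have hBZ : ∀ u, ω ∈ B c u → (∑ r ∈ Finset.range u, Z r ω) ≤ c := by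
      intro u hu
      cases u with
      | zero => simp
      | succ v =>
        have := (hBmem c (v + 1) ω).1 hu v (by omega)
        rw [hPmem] at this
        exact not_lt.1 this
    have hMge : ∀ u, (∑ r ∈ Finset.range u, Z r ω) ≤ c → -(c : ℝ) ≤ M u ω := by
      intro u hZu
      have h1 : 0 ≤ ∑ s ∈ Finset.range u, X s ω := Finset.sum_nonneg fun s _ => hx s
      have h2 := hy u
      simp only [hMdef]; linarith
    by_cases hB : ω ∈ B c t
    · have hsum0 : ∑ k ∈ Finset.range t, (Cs c k).indicator (M k) ω = 0 :=
        Finset.sum_eq_zero fun k hk =>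
          Set.indicator_of_notMem
            (fun hC => (hBmem c t ω).1 hB k (Finset.mem_range.1 hk) ((hCmem c k ω).1 hC).1) _
      have : N c t ω = M t ω := by
        simp only [hNdef, Pi.add_apply]
        rw [Set.indicator_of_mem hB, hsum0, add_zero]
      rw [this]
      exact hMge t (hBZ t hB)
    · have hex2 : ∃ k, ω ∈ Ps c k := by
        by_contra hno
        push_neg at hno
        exact hB ((hBmem c t ω).2 fun s _ => hno s)
      set k₀ := Nat.find hex2 with hk₀
      have hk₀P : ω ∈ Ps c k₀ := Nat.find_spec hex2
      have hk₀min : ∀ j, j < k₀ → ω ∉ Ps c j := fun j hj => Nat.find_min hex2 hj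
      have hk₀B : ω ∈ B c k₀ := (hBmem c k₀ ω).2 fun s hs => hk₀min s hs
      have hk₀t : k₀ < t := by
        by_contra hle
        push_neg at hle
        exact hB ((hBmem c t ω).2 fun s hs => hk₀min s (by omega))
      have hC : ω ∈ Cs c k₀ := (hCmem c k₀ ω).2 ⟨hk₀P, hk₀B⟩
      have hsum : ∑ k ∈ Finset.range t, (Cs c k).indicator (M k) ω = M k₀ ω := by
        rw [Finset.sum_eq_single_of_mem k₀ (Finset.mem_range.2 hk₀t)]
        · exact Set.indicator_of_mem hC _
        · intro j hj hne
          rcases lt_or_gt_of_ne hne with h | h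
          · exact Set.indicator_of_notMem
              (fun hCj => hk₀min j h ((hCmem c j ω).1 hCj).1) _
          · exact Set.indicator_of_notMem
              (fun hCj => ((hBmem c j ω).1 ((hCmem c j ω).1 hCj).2) k₀ h hk₀P) _
      have : N c t ω = M k₀ ω := by
        simp only [hNdef, Pi.add_apply]
        rw [Set.indicator_of_notMem hB, hsum, zero_add]
      rw [this]
      exact hMge k₀ (hBZ k₀ hk₀B)
  -- convergence of each stopped process
  have hconv : ∀ c : ℕ, ∀ᵐ ω ∂μ, ∃ l, Tendsto (fun t => N c t ω) atTop (𝓝 l) := by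
    intro c
    have hc0 : (0 : ℝ) ≤ (c : ℝ) := Nat.cast_nonneg c
    have hbdd : ∀ t, eLpNorm (N c t) 1 μ ≤ ((∫ ω, Y 0 ω ∂μ) + 2 * c).toNNReal := by
      intro t
      have habs : ∀ᵐ ω ∂μ, ‖N c t ω‖ ≤ N c t ω + 2 * c := by
        filter_upwards [hlow c t] with ω h
        rw [Real.norm_eq_abs]
        exact abs_le.2 ⟨by linarith, by linarith⟩
      have hint1 : ∫ ω, ‖N c t ω‖ ∂μ ≤ (∫ ω, Y 0 ω ∂μ) + 2 * c := by
        have h2 : ∫ ω, ‖N c t ω‖ ∂μ ≤ ∫ ω, (N c t ω + 2 * c) ∂μ :=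
          integral_mono_ae (hNint c t).norm ((hNint c t).add (integrable_const _)) habs
        have h3 : ∫ ω, (N c t ω + 2 * c) ∂μ = (∫ ω, N c t ω ∂μ) + 2 * c := by
          rw [integral_add (hNint c t) (integrable_const _), integral_const]
          simp
        have h4 := (hNN0 c t).trans_eq (hN0 c)
        linarith
      have heq : eLpNorm (N c t) 1 μ = ENNReal.ofReal (∫ ω, ‖N c t ω‖ ∂μ) := by
        rw [eLpNorm_one_eq_lintegral_enorm, ← ofReal_integral_norm_eq_lintegral_enorm (hNint c t)]
      rw [heq]
      exact ENNReal.ofReal_le_ofReal hint1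
    have hsub : Submartingale (-(N c)) ℱ μ := (hNsm c).neg
    have hbdd' : ∀ t, eLpNorm ((-(N c)) t) 1 μ ≤ ((∫ ω, Y 0 ω ∂μ) + 2 * c).toNNReal := by
      intro t
      have : (-(N c)) t = -(N c t) := rfl
      rw [this, eLpNorm_neg]
      exact hbdd t
    filter_upwards [hsub.exists_ae_tendsto_of_bdd hbdd'] with ω hω
    obtain ⟨l, hl⟩ := hω
    refine ⟨-l, ?_⟩
    have := hl.neg
    simp only [Pi.neg_apply, neg_neg] at this
    exact this
  -- assemble everything
  refine ⟨fun ω => if h : ∃ l, Tendsto (fun t => Y t ω) atTop (𝓝 l) then h.choose else 0, ?_⟩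
  filter_upwards [hZsum, ae_all_iff.2 hXnn, ae_all_iff.2 hYnn, ae_all_iff.2 hZnn,
    ae_all_iff.2 hconv] with ω hZs hx hy hz hNc
  simp only [Pi.zero_apply] at hx hy hz
  obtain ⟨c, hc⟩ := exists_nat_ge (∑' t, Z t ω)
  have hZle : ∀ n, (∑ r ∈ Finset.range n, Z r ω) ≤ c := fun n =>
    le_trans (Summable.sum_le_tsum (Finset.range n) (fun i _ => hz i) hZs) hc
  have hnot : ∀ s, ω ∉ Ps c s := by
    intro s
    rw [hPmem]
    exact not_lt.2 (hZle (s + 1))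
  have hNM : ∀ t, N c t ω = M t ω := by
    intro t
    have hB : ω ∈ B c t := (hBmem c t ω).2 fun s _ => hnot s
    simp only [hNdef, Pi.add_apply]
    rw [Set.indicator_of_mem hB,
      Finset.sum_eq_zero fun k _ =>
        Set.indicator_of_notMem (fun hC => hnot k ((hCmem c k ω).1 hC).1) _,
      add_zero]
  obtain ⟨L, hL0⟩ := hNc c
  have hML : Tendsto (fun t => M t ω) atTop (𝓝 L) := by
    have heq : (fun t => N c t ω) = fun t => M t ω := funext fun t => hNM t
    rwa [heq] at hL0
  have hSZt : Tendsto (fun t => ∑ r ∈ Finset.range t, Z r ω) atTop (𝓝 (∑' r, Z r ω)) :=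
    hZs.hasSum.tendsto_sum_nat
  obtain ⟨Cb, hCb⟩ := hML.bddAbove_range
  have hXsum : Summable (fun t => X t ω) := by
    apply summable_of_sum_range_le (c := Cb + c) hx
    intro n
    have h1 : M n ω ≤ Cb := hCb (Set.mem_range_self n)
    have h2 := hZle n
    have h3 := hy n
    simp only [hMdef] at h1
    linarith
  have hSXt : Tendsto (fun t => ∑ s ∈ Finset.range t, X s ω) atTop (𝓝 (∑' s, X s ω)) :=
    hXsum.hasSum.tendsto_sum_nat
  have hYt : Tendsto (fun t => Y t ω) atTop (𝓝 (L - ∑' s, X s ω + ∑' r, Z r ω)) := by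
    have h := (hML.sub hSXt).add hSZt
    have heq : (fun t => (M t ω - ∑ s ∈ Finset.range t, X s ω) + ∑ r ∈ Finset.range t, Z r ω)
        = fun t => Y t ω := by
      funext t; simp only [hMdef]; ring
    rwa [heq] at h
  have hEx : ∃ l, Tendsto (fun t => Y t ω) atTop (𝓝 l) := ⟨_, hYt⟩
  refine ⟨hXsum, ?_, ?_⟩
  · rw [dif_pos hEx]
    exact ge_of_tendsto' hEx.choose_spec hy
  · rw [dif_pos hEx]
    exact hEx.choose_spec
end

section
/- Let γ_t ∈ (0,1) with Σ_t γ_t = ∞, and let Y_{t+1} = (1−γ_t)Y_t + γ_t G_t, where {G_t} is a positive nondecreasing real sequence. Then limsup_{t→∞} |Y_t / G_t| ≤ 1. -/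
open Filter Topology Finset

theorem limsup_ratio_le_one (t0 : ℕ) (γ : ℕ → ℝ)
    (hγ : ∀ t, γ t ∈ Set.Ioo (0 : ℝ) 1)
    (hγsum : Tendsto (fun N => ∑ t ∈ Finset.range N, γ t) atTop atTop)
    (G Y : ℕ → ℝ)
    (hGpos : ∀ t, 0 < G t) (hGmono : Monotone G)
    (hY : ∀ t ≥ t0, Y (t + 1) = (1 - γ t) * Y t + γ t * G t) :
    Filter.limsup (fun t => |Y t / G t|) atTop ≤ 1 := by
  set D : ℕ → ℝ := fun t => max (|Y t| - G t) 0 with hD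
  have hDnonneg : ∀ t, 0 ≤ D t := fun t => le_max_right _ _
  have hstep : ∀ t, t0 ≤ t → D (t + 1) ≤ (1 - γ t) * D t := by
    intro t ht
    have hγt := hγ t
    have h1 : 0 ≤ 1 - γ t := by linarith [hγt.2]
    have hY1 : |Y (t + 1)| ≤ (1 - γ t) * |Y t| + γ t * G t := by
      rw [hY t ht]
      calc |(1 - γ t) * Y t + γ t * G t| ≤ |(1 - γ t) * Y t| + |γ t * G t| := abs_add_le _ _
        _ = (1 - γ t) * |Y t| + γ t * G t := by
            rw [abs_mul, abs_mul, abs_of_nonneg h1, abs_of_pos hγt.1,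
              abs_of_pos (hGpos t)]
    have hGm := hGmono (Nat.le_succ t)
    have h2 : |Y (t + 1)| - G (t + 1) ≤ (1 - γ t) * (|Y t| - G t) := by nlinarith
    have h3 : |Y (t + 1)| - G (t + 1) ≤ (1 - γ t) * D t :=
      h2.trans (mul_le_mul_of_nonneg_left (le_max_left _ _) h1)
    exact max_le h3 (mul_nonneg h1 (hDnonneg t))
  set P : ℕ → ℝ := fun t => ∏ s ∈ Finset.Ico t0 t, (1 - γ s) with hP
  have hPnonneg : ∀ t, 0 ≤ P t := by
    intro t; apply Finset.prod_nonneg; intro s _; linarith [(hγ s).2]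
  have hDbound : ∀ t, t0 ≤ t → D t ≤ D t0 * P t := by
    intro t ht
    obtain ⟨n, rfl⟩ := Nat.exists_eq_add_of_le ht
    induction n with
    | zero => simp [hP, Finset.Ico_self]
    | succ n ih =>
      have ihn := ih (Nat.le_add_right t0 n)
      have hfac : 0 ≤ 1 - γ (t0 + n) := by linarith [(hγ (t0 + n)).2]
      calc D (t0 + (n + 1)) = D ((t0 + n) + 1) := by ring_nf
        _ ≤ (1 - γ (t0 + n)) * D (t0 + n) := hstep _ (Nat.le_add_right t0 n)
        _ ≤ (1 - γ (t0 + n)) * (D t0 * P (t0 + n)) :=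
            mul_le_mul_of_nonneg_left ihn hfac
        _ = D t0 * P (t0 + (n + 1)) := by
            rw [hP]
            simp only
            rw [show t0 + (n + 1) = (t0 + n) + 1 from rfl,
              Finset.prod_Ico_succ_top (Nat.le_add_right t0 n)]
            ring
  have hPtend : Tendsto P atTop (𝓝 0) := by
    have hPle : ∀ t, P t ≤ Real.exp (-(∑ s ∈ Finset.Ico t0 t, γ s)) := by
      intro t
      rw [← Finset.sum_neg_distrib, Real.exp_sum]
      apply Finset.prod_le_prod
      · intro s _; linarith [(hγ s).2]
      · intro s _
        have := Real.add_one_le_exp (-(γ s))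
        linarith
    have hsum : Tendsto (fun t => ∑ s ∈ Finset.Ico t0 t, γ s) atTop atTop := by
      have hev : ∀ᶠ t in atTop, (∑ s ∈ Finset.range t, γ s) - (∑ s ∈ Finset.range t0, γ s)
          = ∑ s ∈ Finset.Ico t0 t, γ s := by
        filter_upwards [eventually_ge_atTop t0] with t ht
        rw [Finset.sum_Ico_eq_sub _ ht]
      exact Tendsto.congr' hev (hγsum.atTop_add tendsto_const_nhds)
    have hexp : Tendsto (fun t => Real.exp (-(∑ s ∈ Finset.Ico t0 t, γ s))) atTop (𝓝 0) :=
      Real.tendsto_exp_atBot.comp (tendsto_neg_atBot_iff.mpr hsum)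
    exact squeeze_zero hPnonneg hPle hexp
  have hDtend : Tendsto D atTop (𝓝 0) := by
    have hmul : Tendsto (fun t => D t0 * P t) atTop (𝓝 0) := by
      have := hPtend.const_mul (D t0)
      simpa using this
    apply squeeze_zero' (Eventually.of_forall hDnonneg) _ hmul
    filter_upwards [eventually_ge_atTop t0] with t ht
    exact hDbound t ht
  have hgtend : Tendsto (fun t => 1 + D t / G t0) atTop (𝓝 1) := by
    have := (hDtend.div_const (G t0)).const_add 1
    simpa using this
  have hle : ∀ᶠ t in atTop, |Y t / G t| ≤ 1 + D t / G t0 := by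
    filter_upwards [eventually_ge_atTop t0] with t ht
    have hGt := hGpos t
    have hG0 := hGpos t0
    have hGle : G t0 ≤ G t := hGmono ht
    have habs : |Y t| ≤ G t + D t := by
      have : |Y t| - G t ≤ D t := le_max_left _ _
      linarith
    rw [abs_div, abs_of_pos hGt]
    rw [div_le_iff₀ hGt]
    have hdiv : D t / G t0 * G t0 ≤ D t / G t0 * G t :=
      mul_le_mul_of_nonneg_left hGle (div_nonneg (hDnonneg t) hG0.le)
    rw [div_mul_cancel₀ _ hG0.ne'] at hdiv
    nlinarith [div_nonneg (hDnonneg t) hG0.le]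
  calc Filter.limsup (fun t => |Y t / G t|) atTop
      ≤ Filter.limsup (fun t => 1 + D t / G t0) atTop := by
        refine Filter.limsup_le_limsup hle ?_ ?_
        · exact Filter.IsCoboundedUnder.of_frequently_ge
            (Frequently.of_forall fun t => abs_nonneg _)
        · exact hgtend.isBoundedUnder_le
    _ = 1 := hgtend.limsup_eq
end
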